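/- Let q be a prime power and H the polarity graph whose vertices are the 1-dimensional subspaces of GF(q)³, with two vertices adjacent iff the subspaces are orthogonal. Then H is C_4-free, has q² + q + 1 vertices, diameter 2, and every vertex has degree q or q+1 (degree q exactly when the corresponding subspace is self-orthogonal). -/

import Mathlib

open SimpleGraph Finset

/-- G contains no 4-cycle as a (not necessarily induced) subgraph. -/
def C4Free {V : Type*} (G : SimpleGraph V) : Prop :=
  ¬ ∃ a b c d : V, a ≠ c ∧ b ≠ d ∧ G.Adj a b ∧ G.Adj b c ∧ G.Adj c d ∧ G.Adj d a

/-- The polarity graph of `PG(2,q)`: vertices are the 1-dimensional subspaces of `F³`,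
two subspaces adjacent iff they are distinct and orthogonal w.r.t. the standard
bilinear form. -/
def polarityGraph (F : Type*) [Field F] :
    SimpleGraph {W : Submodule F (Fin 3 → F) // Module.finrank F W = 1} where
  Adj W₁ W₂ := W₁ ≠ W₂ ∧ ∀ x ∈ W₁.1, ∀ y ∈ W₂.1, ∑ i, x i * y i = 0
  symm := by
    constructor
    rintro W₁ W₂ ⟨hne, h⟩
    refine ⟨hne.symm, fun y hy x hx => ?_⟩
    rw [Finset.sum_congr rfl (fun i _ => mul_comm (y i) (x i))]
    exact h x hx y hy
  loopless := ⟨fun W h => h.1 rfl⟩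

/-- A 1-dimensional subspace is self-orthogonal if the standard bilinear form
vanishes on it. -/
def SelfOrth {F : Type*} [Field F] (W : Submodule F (Fin 3 → F)) : Prop :=
  ∀ x ∈ W, ∀ y ∈ W, ∑ i, x i * y i = 0

namespace Stmt18Aux

open Module Submodule

variable {F : Type*} [Field F]

/-- dot product with a fixed vector, as a linear map -/
def phi (v : Fin 3 → F) : (Fin 3 → F) →ₗ[F] F where
  toFun y := ∑ i, v i * y i
  map_add' x y := by simp [mul_add, Finset.sum_add_distrib]
  map_smul' c y := by simp [Finset.mul_sum, mul_left_comm]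

lemma phi_apply (v y : Fin 3 → F) : phi v y = ∑ i, v i * y i := rfl

lemma phi_single (v : Fin 3 → F) (j : Fin 3) : phi v (Pi.single j 1) = v j := by
  simp [phi_apply, Pi.single_apply, mul_ite]

lemma phi_ne_zero {v : Fin 3 → F} (hv : v ≠ 0) : phi v ≠ 0 := by
  intro h
  apply hv
  funext j
  have := congrArg (fun f : (Fin 3 → F) →ₗ[F] F => f (Pi.single j 1)) h
  simpa [phi_single] using this

lemma exists_gen {W : Submodule F (Fin 3 → F)} (h : finrank F W = 1) :
    ∃ v : Fin 3 → F, v ≠ 0 ∧ W = Submodule.span F {v} := by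
  obtain ⟨⟨v, hvW⟩, hv0, hall⟩ := finrank_eq_one_iff'.mp h
  have hvne : v ≠ 0 := fun h0 => hv0 (Subtype.ext h0)
  refine ⟨v, hvne, le_antisymm ?_ ?_⟩
  · intro w hw
    obtain ⟨c, hc⟩ := hall ⟨w, hw⟩
    have : c • v = w := congrArg Subtype.val hc
    rw [← this]
    exact Submodule.smul_mem _ _ (Submodule.subset_span rfl)
  · rw [Submodule.span_le, Set.singleton_subset_iff]; exact hvW

lemma finrank_ker_phi {v : Fin 3 → F} (hv : v ≠ 0) :
    finrank F (LinearMap.ker (phi v)) = 2 := by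
  have h := LinearMap.finrank_range_add_finrank_ker (phi v)
  have hr : LinearMap.range (phi v) = ⊤ := by
    rcases eq_bot_or_eq_top (LinearMap.range (phi v)) with h1 | h1
    · exact absurd (LinearMap.range_eq_bot.mp h1) (phi_ne_zero hv)
    · exact h1
  rw [hr, finrank_top, finrank_self, finrank_fin_fun] at h
  omega

/-- adjacency characterization -/
lemma adj_iff {v : Fin 3 → F} (hv : v ≠ 0)
    (W U : {W : Submodule F (Fin 3 → F) // finrank F W = 1})
    (hW : W.1 = Submodule.span F {v}) :
    (polarityGraph F).Adj W U ↔ U ≠ W ∧ U.1 ≤ LinearMap.ker (phi v) := by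
  constructor
  · rintro ⟨hne, h⟩
    refine ⟨fun h' => hne h'.symm, fun y hy => ?_⟩
    rw [LinearMap.mem_ker, phi_apply]
    exact h v (hW ▸ Submodule.subset_span rfl) y hy
  · rintro ⟨hne, h⟩
    refine ⟨fun h' => hne h'.symm, fun x hx y hy => ?_⟩
    rw [hW] at hx
    obtain ⟨c, rfl⟩ := Submodule.mem_span_singleton.mp hx
    have := h hy
    rw [LinearMap.mem_ker, phi_apply] at this
    calc ∑ i, (c • v) i * y i = c * ∑ i, v i * y i := by
          simp [Finset.mul_sum, mul_assoc]
      _ = 0 := by rw [this, mul_zero]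

lemma selfOrth_iff {v : Fin 3 → F}
    (W : Submodule F (Fin 3 → F)) (hW : W = Submodule.span F {v}) :
    SelfOrth W ↔ W ≤ LinearMap.ker (phi v) := by
  subst hW
  constructor
  · intro h x hx
    rw [LinearMap.mem_ker, phi_apply]
    exact h v (Submodule.subset_span rfl) x hx
  · intro h x hx y hy
    obtain ⟨c, rfl⟩ := Submodule.mem_span_singleton.mp hx
    have := h hy
    rw [LinearMap.mem_ker, phi_apply] at this
    calc ∑ i, (c • v) i * y i = c * ∑ i, v i * y i := by
          simp [Finset.mul_sum, mul_assoc]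
      _ = 0 := by rw [this, mul_zero]

/-- two nonzero vectors whose dot-product functionals have the same kernel are proportional -/
lemma prop_of_ker_eq {u w : Fin 3 → F} (hw : w ≠ 0)
    (h : LinearMap.ker (phi u) = LinearMap.ker (phi w)) : ∃ c : F, u = c • w := by
  have hx : ∃ x, phi w x ≠ 0 := by
    by_contra hc
    push_neg at hc
    exact phi_ne_zero hw (LinearMap.ext fun x => hc x)
  obtain ⟨x, hx⟩ := hx
  refine ⟨phi u x / phi w x, ?_⟩
  have key : ∀ y, phi u y = (phi u x / phi w x) * phi w y := by
    intro y
    have hz : y - (phi w y / phi w x) • x ∈ LinearMap.ker (phi w) := by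
      rw [LinearMap.mem_ker, map_sub, map_smul, smul_eq_mul]
      field_simp; ring
    rw [← h, LinearMap.mem_ker, map_sub, map_smul, smul_eq_mul, sub_eq_zero] at hz
    rw [hz]; field_simp
  funext j
  have := key (Pi.single j 1)
  rw [phi_single, phi_single] at this
  simpa using this

section Counting

variable [Fintype F]

lemma nat_card_ne {α : Type*} [Finite α] (a : α) :
    Nat.card {x : α // x ≠ a} = Nat.card α - 1 := by
  classical
  letI := Fintype.ofFinite α
  rw [Nat.card_eq_fintype_card, Nat.card_eq_fintype_card]
  calc Fintype.card {x : α // ¬ x = a}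
      = Fintype.card α - Fintype.card {x : α // x = a} := Fintype.card_subtype_compl _
    _ = Fintype.card α - 1 := by rw [Fintype.card_subtype_eq]

lemma card_lines_mul (V : Type*) [AddCommGroup V] [Module F V] [FiniteDimensional F V] :
    Nat.card {W : Submodule F V // finrank F W = 1} * (Fintype.card F - 1)
      = Fintype.card F ^ finrank F V - 1 := by
  classical
  have hfin : Finite V := Module.finite_of_finite F
  letI : Fintype V := Fintype.ofFinite V
  letI : Fintype {W : Submodule F V // finrank F W = 1} := Fintype.ofFinite _
  set L := {W : Submodule F V // finrank F W = 1}
  let f : {v : V // v ≠ 0} → L := fun v => ⟨span F {v.1}, finrank_span_singleton v.2⟩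
  have fiberEquiv : ∀ W : L, {x : {v : V // v ≠ 0} // f x = W} ≃ {y : W.1 // y ≠ 0} := by
    intro W
    refine ⟨fun x => ⟨⟨x.1.1, ?_⟩, ?_⟩, fun y => ⟨⟨y.1.1, fun h0 => y.2 (Subtype.ext h0)⟩, ?_⟩, ?_, ?_⟩
    · have h1 : (f x.1).1 = W.1 := congrArg Subtype.val x.2
      have : span F {x.1.1} = W.1 := h1
      exact this ▸ Submodule.subset_span rfl
    · intro h0
      exact x.1.2 (by simpa using congrArg Subtype.val h0)
    · apply Subtype.ext
      show (span F {y.1.1} : Submodule F V) = W.1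
      apply Submodule.eq_of_le_of_finrank_le
      · rw [span_le, Set.singleton_subset_iff]; exact y.1.2
      · rw [W.2, finrank_span_singleton (fun h0 => y.2 (Subtype.ext h0))]
    · intro x; apply Subtype.ext; apply Subtype.ext; rfl
    · intro y; apply Subtype.ext; apply Subtype.ext; rfl
  have e : {v : V // v ≠ 0} ≃ Σ W : L, {y : W.1 // y ≠ 0} :=
    (Equiv.sigmaFiberEquiv f).symm.trans (Equiv.sigmaCongrRight fiberEquiv)
  have h1 : Nat.card {v : V // v ≠ 0} = Fintype.card F ^ finrank F V - 1 := by
    rw [nat_card_ne, Nat.card_eq_fintype_card, card_eq_pow_finrank (K := F)]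
  have h2 : Nat.card {v : V // v ≠ 0}
      = Nat.card L * (Fintype.card F - 1) := by
    rw [Nat.card_congr e, Nat.card_eq_fintype_card, Fintype.card_sigma]
    have hW : ∀ W : L, Fintype.card {y : W.1 // y ≠ 0} = Fintype.card F - 1 := by
      intro W
      rw [← Nat.card_eq_fintype_card, nat_card_ne, Nat.card_eq_fintype_card,
        card_eq_pow_finrank (K := F), W.2, pow_one]
    rw [Finset.sum_congr rfl (fun W _ => hW W), Finset.sum_const, Finset.card_univ, smul_eq_mul,
      Nat.card_eq_fintype_card]
  rw [← h2, h1]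

/-- the number of lines inside a plane -/
lemma card_lines_le_plane (K : Submodule F (Fin 3 → F)) (hK : finrank F K = 2) :
    Nat.card {U : {W : Submodule F (Fin 3 → F) // finrank F W = 1} // U.1 ≤ K}
      = Fintype.card F + 1 := by
  have g : {p : Submodule F K // finrank F p = 1}
      ≃ {U : {W : Submodule F (Fin 3 → F) // finrank F W = 1} // U.1 ≤ K} := by
    refine ⟨fun p => ⟨⟨Submodule.map K.subtype p.1, ?_⟩, Submodule.map_subtype_le K p.1⟩,
      fun U => ⟨Submodule.comap K.subtype U.1.1, ?_⟩, ?_, ?_⟩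
    · rw [Submodule.finrank_map_subtype_eq]
      exact p.2
    · have hmap : Submodule.map K.subtype (Submodule.comap K.subtype U.1.1) = U.1.1 := by
        rw [Submodule.map_comap_subtype, inf_eq_right.mpr U.2]
      rw [← Submodule.finrank_map_subtype_eq, hmap]
      exact U.1.2
    · intro p
      apply Subtype.ext
      show Submodule.comap K.subtype (Submodule.map K.subtype p.1) = p.1
      rw [Submodule.comap_map_eq, Submodule.ker_subtype, sup_bot_eq]
    · intro U
      apply Subtype.ext
      apply Subtype.ext
      show Submodule.map K.subtype (Submodule.comap K.subtype U.1.1) = U.1.1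
      rw [Submodule.map_comap_subtype, inf_eq_right.mpr U.2]
  have h := card_lines_mul (F := F) K
  rw [hK] at h
  rw [← Nat.card_congr g]
  have hq2 : 1 < Fintype.card F := Fintype.one_lt_card
  apply Nat.eq_of_mul_eq_mul_right (Nat.sub_pos_of_lt hq2)
  rw [h]
  have : Fintype.card F ^ 2 - 1 = (Fintype.card F + 1) * (Fintype.card F - 1) := by
    obtain ⟨m, hm⟩ : ∃ m, Fintype.card F = m + 1 := ⟨Fintype.card F - 1, by omega⟩
    rw [hm]
    have : (m + 1) ^ 2 = m * m + 2 * m + 1 := by ring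
    rw [this]
    simp [Nat.add_sub_cancel]
    ring
  rw [this]

end Counting

end Stmt18Aux

open Stmt18Aux Module Submodule in
theorem stmt18 (q : ℕ) (hq : IsPrimePow q) (F : Type*) [Field F] [Fintype F]
    (hF : Fintype.card F = q) :
    C4Free (polarityGraph F)
      ∧ Nat.card {W : Submodule F (Fin 3 → F) // Module.finrank F W = 1}
          = q ^ 2 + q + 1
      ∧ (∀ u v, (polarityGraph F).dist u v ≤ 2)
      ∧ (∃ u v, (polarityGraph F).dist u v = 2)
      ∧ (∀ W : {W : Submodule F (Fin 3 → F) // Module.finrank F W = 1},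
          (SelfOrth W.1 → Nat.card ((polarityGraph F).neighborSet W) = q)
          ∧ (¬SelfOrth W.1 → Nat.card ((polarityGraph F).neighborSet W) = q + 1)) := by
  classical
  haveI : Finite (Submodule F (Fin 3 → F)) :=
    Finite.of_injective _ (SetLike.coe_injective (A := Submodule F (Fin 3 → F)))
  set L := {W : Submodule F (Fin 3 → F) // Module.finrank F W = 1} with hL
  have hq2 : 2 ≤ q := hq.two_le
  -- C4-free
  have hC4 : C4Free (polarityGraph F) := by
    rintro ⟨a, b, c, d, hac, hbd, hab, hbc, hcd, hda⟩
    obtain ⟨va, hva0, hva⟩ := exists_gen a.2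
    obtain ⟨vc, hvc0, hvc⟩ := exists_gen c.2
    have hb1 : b.1 ≤ LinearMap.ker (phi va) := ((adj_iff hva0 a b hva).mp hab).2
    have hb2 : b.1 ≤ LinearMap.ker (phi vc) := ((adj_iff hvc0 c b hvc).mp hbc.symm).2
    have hd1 : d.1 ≤ LinearMap.ker (phi vc) := ((adj_iff hvc0 c d hvc).mp hcd).2
    have hd2 : d.1 ≤ LinearMap.ker (phi va) := ((adj_iff hva0 a d hva).mp hda.symm).2
    have hker_ne : LinearMap.ker (phi va) ≠ LinearMap.ker (phi vc) := by
      intro h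
      obtain ⟨co, hco⟩ := prop_of_ker_eq hvc0 h
      apply hac
      apply Subtype.ext
      apply Submodule.eq_of_le_of_finrank_le
      · rw [hva, hvc, hco, Submodule.span_le, Set.singleton_subset_iff]
        exact Submodule.smul_mem _ _ (Submodule.subset_span rfl)
      · rw [a.2, c.2]
    have hKlt : LinearMap.ker (phi va) ⊓ LinearMap.ker (phi vc) < LinearMap.ker (phi va) := by
      refine lt_of_le_of_ne inf_le_left (fun h => hker_ne ?_)
      apply Submodule.eq_of_le_of_finrank_le (h ▸ inf_le_right)
      rw [finrank_ker_phi hva0, finrank_ker_phi hvc0]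
    have hKr : finrank F (LinearMap.ker (phi va) ⊓ LinearMap.ker (phi vc) : Submodule F (Fin 3 → F)) < 2 := by
      rw [← finrank_ker_phi hva0]
      exact Submodule.finrank_lt_finrank_of_lt hKlt
    have hbK : b.1 = LinearMap.ker (phi va) ⊓ LinearMap.ker (phi vc) := by
      apply Submodule.eq_of_le_of_finrank_le (le_inf hb1 hb2)
      rw [b.2]; omega
    have hdK : d.1 = LinearMap.ker (phi va) ⊓ LinearMap.ker (phi vc) := by
      apply Submodule.eq_of_le_of_finrank_le (le_inf hd2 hd1)
      rw [d.2]; omega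
    exact hbd (Subtype.ext (hbK.trans hdK.symm))
  -- common neighbor for non-adjacent distinct vertices
  have hcommon : ∀ u v : L, u ≠ v → ¬ (polarityGraph F).Adj u v →
      ∃ w, (polarityGraph F).Adj u w ∧ (polarityGraph F).Adj w v := by
    intro u v huv hnadj
    obtain ⟨x, hx0, hx⟩ := exists_gen u.2
    obtain ⟨y, hy0, hy⟩ := exists_gen v.2
    have hfr : 1 ≤ finrank F (LinearMap.ker (phi x) ⊓ LinearMap.ker (phi y) : Submodule F (Fin 3 → F)) := by
      have h := Submodule.finrank_sup_add_finrank_inf_eq (LinearMap.ker (phi x)) (LinearMap.ker (phi y))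
      have hsup : finrank F (LinearMap.ker (phi x) ⊔ LinearMap.ker (phi y) : Submodule F (Fin 3 → F)) ≤ 3 := by
        have := Submodule.finrank_le (LinearMap.ker (phi x) ⊔ LinearMap.ker (phi y) : Submodule F (Fin 3 → F))
        rwa [finrank_fin_fun] at this
      rw [finrank_ker_phi hx0, finrank_ker_phi hy0] at h
      omega
    obtain ⟨z, hz, hz0⟩ : ∃ z ∈ (LinearMap.ker (phi x) ⊓ LinearMap.ker (phi y) : Submodule F (Fin 3 → F)), z ≠ 0 := by
      rw [← Submodule.ne_bot_iff]
      intro h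
      rw [h, finrank_bot] at hfr
      omega
    refine ⟨⟨Submodule.span F {z}, finrank_span_singleton hz0⟩, ?_, ?_⟩
    · rw [adj_iff hx0 u _ hx]
      constructor
      · intro h
        -- if w = u then u = span z ≤ ker (phi y), so v adj u
        apply hnadj
        have hu_le : u.1 ≤ LinearMap.ker (phi y) := by
          rw [← h]
          show (Submodule.span F {z} : Submodule F (Fin 3 → F)) ≤ _
          rw [Submodule.span_le, Set.singleton_subset_iff]
          exact hz.2
        exact ((adj_iff hy0 v u hy).mpr ⟨huv.symm ∘ Eq.symm ∘ Eq.symm ∘ id ∘ Eq.symm, hu_le⟩).symm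
      · show (Submodule.span F {z} : Submodule F (Fin 3 → F)) ≤ _
        rw [Submodule.span_le, Set.singleton_subset_iff]
        exact hz.1
    · refine SimpleGraph.Adj.symm ?_
      rw [adj_iff hy0 v _ hy]
      constructor
      · intro h
        apply hnadj
        have hv_le : v.1 ≤ LinearMap.ker (phi x) := by
          rw [← congrArg Subtype.val h]
          show (Submodule.span F {z} : Submodule F (Fin 3 → F)) ≤ _
          rw [Submodule.span_le, Set.singleton_subset_iff]
          exact hz.1
        exact (adj_iff hx0 u v hx).mpr ⟨huv.symm, hv_le⟩
      · show (Submodule.span F {z} : Submodule F (Fin 3 → F)) ≤ _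
        rw [Submodule.span_le, Set.singleton_subset_iff]
        exact hz.2
  -- diameter ≤ 2
  have hdist : ∀ u v : L, (polarityGraph F).dist u v ≤ 2 := by
    intro u v
    by_cases h1 : u = v
    · subst h1; simp [SimpleGraph.dist_self]
    by_cases h2 : (polarityGraph F).Adj u v
    · calc (polarityGraph F).dist u v ≤ (h2.toWalk).length := SimpleGraph.dist_le _
        _ ≤ 2 := by simp
    obtain ⟨w, hw1, hw2⟩ := hcommon u v h1 h2
    calc (polarityGraph F).dist u v ≤ (SimpleGraph.Walk.cons hw1 (SimpleGraph.Walk.cons hw2 SimpleGraph.Walk.nil)).length :=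
          SimpleGraph.dist_le _
      _ = 2 := by simp
  -- vertex count
  have harith : ∀ n : ℕ, 1 ≤ n → (n ^ 2 + n + 1) * (n - 1) = n ^ 3 - 1 := by
    intro n hn
    obtain ⟨m, rfl⟩ : ∃ m, n = m + 1 := ⟨n - 1, by omega⟩
    have e1 : ((m + 1) ^ 2 + (m + 1) + 1) * ((m + 1) - 1)
        = ((m + 1) ^ 2 + (m + 1) + 1) * m := by rw [Nat.add_sub_cancel]
    have e2 : ((m + 1) ^ 2 + (m + 1) + 1) * m + 1 = (m + 1) ^ 3 := by ring
    rw [e1, ← e2, Nat.add_sub_cancel]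
  have hcount : Nat.card L = q ^ 2 + q + 1 := by
    have h := card_lines_mul (F := F) (Fin 3 → F)
    rw [finrank_fin_fun, hF] at h
    apply Nat.eq_of_mul_eq_mul_right (show 0 < q - 1 by omega)
    rw [h, harith q (by omega)]
  -- a pair at distance 2
  have hdist2 : ∃ u v : L, (polarityGraph F).dist u v = 2 := by
    have he0 : (Pi.single 0 1 : Fin 3 → F) ≠ 0 := by
      intro h
      have := congrFun h 0
      simp at this
    have he01 : (Pi.single 0 1 + Pi.single 1 1 : Fin 3 → F) ≠ 0 := by
      intro h
      have := congrFun h 0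
      simp [Pi.single_apply] at this
    refine ⟨⟨Submodule.span F {Pi.single 0 1}, finrank_span_singleton he0⟩,
      ⟨Submodule.span F {Pi.single 0 1 + Pi.single 1 1}, finrank_span_singleton he01⟩, ?_⟩
    set u : L := ⟨Submodule.span F {Pi.single 0 1}, finrank_span_singleton he0⟩ with hu
    set v : L := ⟨Submodule.span F {Pi.single 0 1 + Pi.single 1 1}, finrank_span_singleton he01⟩ with hvv
    have hne : u ≠ v := by
      intro h
      have hmem : (Pi.single 0 1 + Pi.single 1 1 : Fin 3 → F) ∈ Submodule.span F {(Pi.single 0 1 : Fin 3 → F)} := by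
        have h' : (u.1 : Submodule F (Fin 3 → F)) = v.1 := congrArg Subtype.val h
        rw [hu, hvv] at h'
        simp only at h'
        rw [h']
        exact Submodule.subset_span rfl
      obtain ⟨c, hc⟩ := Submodule.mem_span_singleton.mp hmem
      have := congrFun hc 1
      simp [Pi.single_apply] at this
    have hnadj : ¬ (polarityGraph F).Adj u v := by
      rintro ⟨-, h⟩
      have := h (Pi.single 0 1) (Submodule.subset_span rfl)
        (Pi.single 0 1 + Pi.single 1 1) (Submodule.subset_span rfl)
      simp [Fin.sum_univ_three, Pi.single_apply] at this
    obtain ⟨w, hw1, hw2⟩ := hcommon u v hne hnadj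
    have hreach : (polarityGraph F).Reachable u v :=
      ⟨SimpleGraph.Walk.cons hw1 (SimpleGraph.Walk.cons hw2 SimpleGraph.Walk.nil)⟩
    have hpos := hreach.pos_dist_of_ne hne
    have hle := hdist u v
    have hne1 : (polarityGraph F).dist u v ≠ 1 := fun h =>
      hnadj (SimpleGraph.dist_eq_one_iff_adj.mp h)
    omega
  -- degrees
  refine ⟨hC4, hcount, hdist, hdist2, fun W => ?_⟩
  obtain ⟨v, hv0, hvW⟩ := exists_gen W.2
  have hK2 := finrank_ker_phi hv0
  have e1 : ((polarityGraph F).neighborSet W : Type _)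
      ≃ {U : L // U ≠ W ∧ U.1 ≤ LinearMap.ker (phi v)} :=
    Equiv.subtypeEquivRight (fun U => by
      rw [SimpleGraph.mem_neighborSet, adj_iff hv0 W U hvW])
  have hSO := selfOrth_iff (v := v) W.1 hvW
  constructor
  · intro h
    have hWK : W.1 ≤ LinearMap.ker (phi v) := hSO.mp h
    have e2 : {U : L // U ≠ W ∧ U.1 ≤ LinearMap.ker (phi v)}
        ≃ {x : {U : L // U.1 ≤ LinearMap.ker (phi v)} // x ≠ ⟨W, hWK⟩} :=
      ⟨fun U => ⟨⟨U.1, U.2.2⟩, fun h' => U.2.1 (congrArg Subtype.val h')⟩,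
       fun x => ⟨x.1.1, fun h' => x.2 (Subtype.ext h'), x.1.2⟩,
       fun U => rfl, fun x => rfl⟩
    rw [Nat.card_congr (e1.trans e2), nat_card_ne, card_lines_le_plane _ hK2, hF]
    omega
  · intro h
    have hWK : ¬ W.1 ≤ LinearMap.ker (phi v) := fun h' => h (hSO.mpr h')
    have e2 : {U : L // U ≠ W ∧ U.1 ≤ LinearMap.ker (phi v)}
        ≃ {U : L // U.1 ≤ LinearMap.ker (phi v)} :=
      Equiv.subtypeEquivRight (fun U =>
        ⟨And.right, fun h' => ⟨fun he => hWK (by rw [← he]; exact h'), h'⟩⟩)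
    rw [Nat.card_congr (e1.trans e2), card_lines_le_plane _ hK2, hF]
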